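/- Let V be a finite-dimensional complex vector space and let Γ : V × V → V be a symmetric bilinear map. Then the following are equivalent: (1) for every v ∈ V the vector Γ(v,v) is proportional to v, i.e. there exists λ ∈ ℂ with Γ(v,v) = λ·v; (2) there exists a linear functional α : V → ℂ such that Γ(u,v) = α(u)·v + α(v)·u for all u, v ∈ V. -/
import Mathlib


/-- For a symmetric bilinear map `Γ : V × V → V` on a finite-dimensional complex vector
space, `Γ(v,v)` is proportional to `v` for every `v` if and only if there is a linear
functional `α` with `Γ(u,v) = α(u)•v + α(v)•u` for all `u, v`. -/
theorem symm_bilinear_proportional_iff_exists_functional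
    {V : Type*} [AddCommGroup V] [Module ℂ V] [FiniteDimensional ℂ V]
    (Γ : V →ₗ[ℂ] V →ₗ[ℂ] V) (hsym : ∀ u v : V, Γ u v = Γ v u) :
    (∀ v : V, ∃ lam : ℂ, Γ v v = lam • v) ↔
    (∃ α : V →ₗ[ℂ] ℂ, ∀ u v : V, Γ u v = α u • v + α v • u) := by
  constructor
  · intro h
    classical
    set L : V → ℂ := fun v => if hv : v = 0 then 0 else Classical.choose (h v) with hLdef
    have hL0 : L 0 = 0 := by simp [hLdef]
    have hL : ∀ v, Γ v v = L v • v := by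
      intro v
      by_cases hv : v = 0
      · simp [hv]
      · simp only [hLdef, dif_neg hv]
        exact Classical.choose_spec (h v)
    have hLuniq : ∀ (v : V) (c : ℂ), v ≠ 0 → Γ v v = c • v → L v = c := by
      intro v c hv hc
      have h1 : L v • v = c • v := by rw [← hL, hc]
      exact smul_left_injective ℂ hv h1
    have hsmul : ∀ (c : ℂ) (v : V), L (c • v) = c * L v := by
      intro c v
      by_cases hv : v = 0
      · simp [hv, hL0]
      by_cases hc : c = 0
      · simp [hc, hL0]
      · refine hLuniq _ _ (smul_ne_zero hc hv) ?_
        simp only [map_smul, LinearMap.smul_apply, hL v, smul_smul]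
        module
    have hpol : ∀ u v : V,
        (2:ℂ) • Γ u v = (L (u+v) - L u) • u + (L (u+v) - L v) • v := by
      intro u v
      have h1 : (2:ℂ) • Γ u v = Γ (u+v) (u+v) - Γ u u - Γ v v := by
        simp only [map_add, LinearMap.add_apply, hsym v u]
        module
      rw [h1, hL (u+v), hL u, hL v]
      module
    have hadd_ind : ∀ u v : V, LinearIndependent ℂ ![u, v] → L (u+v) = L u + L v := by
      intro u v hind
      have e1 := hpol u v
      have e2 := hpol u ((2:ℂ) • v)
      have hΓ2 : Γ u ((2:ℂ) • v) = (2:ℂ) • Γ u v := by rw [map_smul]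
      rw [hΓ2, hsmul] at e2
      set p := L (u + v) with hp
      set q := L (u + (2:ℂ) • v) with hq
      set a := L u with ha
      set b := L v with hb
      have e4 : ((q - a) - 2*(p - a)) • u + (2*(q - 2*b) - 2*(p - b)) • v = 0 := by
        calc ((q - a) - 2*(p - a)) • u + (2*(q - 2*b) - 2*(p - b)) • v
            = ((q - a) • u + (q - 2*b) • ((2:ℂ) • v)) - (2:ℂ) • ((p - a) • u + (p - b) • v) := by
              module
          _ = (2:ℂ) • ((2:ℂ) • Γ u v) - (2:ℂ) • ((2:ℂ) • Γ u v) := by rw [← e1, ← e2]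
          _ = 0 := sub_self _
      obtain ⟨k1, k2⟩ := (LinearIndependent.pair_iff.mp hind) _ _ e4
      linear_combination -k1 + k2/2
    have hadd : ∀ u v : V, L (u+v) = L u + L v := by
      intro u v
      by_cases hind : LinearIndependent ℂ ![u, v]
      · exact hadd_ind u v hind
      · rw [linearIndependent_fin2] at hind
        push_neg at hind
        simp only [Matrix.cons_val_zero, Matrix.cons_val_one, Matrix.head_cons] at hind
        rcases eq_or_ne v 0 with hv | hv
        · simp [hv, hL0]
        · obtain ⟨a, ha⟩ := hind hv
          subst ha
          rw [show a • v + v = (a+1) • v by module, hsmul, hsmul]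
          ring
    refine ⟨⟨⟨fun v => L v / 2, ?_⟩, ?_⟩, ?_⟩
    · intro u v; simp only [hadd]; ring
    · intro c v; simp only [hsmul, RingHom.id_apply, smul_eq_mul]; ring
    · intro u v
      show Γ u v = (L u / 2) • v + (L v / 2) • u
      by_cases hind : LinearIndependent ℂ ![u, v]
      · have e1 := hpol u v
        rw [hadd u v] at e1
        have e2 : Γ u v = ((2:ℂ)⁻¹) • ((2:ℂ) • Γ u v) := by
          rw [smul_smul]; norm_num
        rw [e2, e1]
        match_scalars <;> ring
      · rw [linearIndependent_fin2] at hind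
        push_neg at hind
        simp only [Matrix.cons_val_zero, Matrix.cons_val_one, Matrix.head_cons] at hind
        rcases eq_or_ne v 0 with hv | hv
        · simp [hv, hL0]
        · obtain ⟨a, ha⟩ := hind hv
          subst ha
          simp only [map_smul, LinearMap.smul_apply, hL v, hsmul, smul_smul]
          match_scalars ; ring
  · rintro ⟨α, hα⟩ v
    exact ⟨α v + α v, by rw [hα v v, add_smul]⟩
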